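/- Fix α ∈ ℝ. Then Z(β, α) = 1 + o(β) as β → 0⁺; that is, lim_{β→0⁺} (Z(β, α) − 1)/β = 0. -/

import Mathlib

/-- The theta-function ratio Z(β, α) = (Σₙ e^{−β(n−α−1/2)²}) / (Σₙ e^{−β(n−α)²}). -/
noncomputable def thetaRatio (β α : ℝ) : ℝ :=
  (∑' n : ℤ, Real.exp (-β * ((n : ℝ) - α - 1 / 2) ^ 2))
    / (∑' n : ℤ, Real.exp (-β * ((n : ℝ) - α) ^ 2))

open Real Complex Filter

lemma gauss_summable {b : ℝ} (hb : 0 < b) (c : ℝ) :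
    Summable (fun n : ℤ => Real.exp (-b * ((n : ℝ) - c) ^ 2)) := by
  have hπ : (0:ℝ) < π := Real.pi_pos
  have hτ : (0:ℝ) < ((((b/π : ℝ) : ℂ)) * Complex.I).im := by
    simp [Complex.mul_I_im, Complex.ofReal_re]
    positivity
  have hs : Summable (fun n : ℤ =>
      jacobiTheta₂_term n (((-(b*c)/π : ℝ) : ℂ) * Complex.I) (((b/π : ℝ) : ℂ) * Complex.I)) :=
    (summable_jacobiTheta₂_term_iff _ _).mpr hτ
  have hns := summable_norm_iff.mpr hs
  simp only [norm_jacobiTheta₂_term, Complex.mul_I_im, Complex.ofReal_re] at hns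
  have h2 := hns.mul_left (Real.exp (-b * c ^ 2))
  refine h2.congr fun n => ?_
  rw [← Real.exp_add]
  congr 1
  field_simp
  ring

lemma gauss_summable0 {b : ℝ} (hb : 0 < b) :
    Summable (fun n : ℤ => Real.exp (-b * (n : ℝ) ^ 2)) := by
  simpa using gauss_summable hb 0

noncomputable def gTerm (β c : ℝ) (n : ℤ) : ℂ :=
  Complex.exp (((-(π^2/β) * (n:ℝ)^2 : ℝ) : ℂ) + ((-(2*π*c*(n:ℝ)) : ℝ) : ℂ) * Complex.I)

lemma norm_gTerm (β c : ℝ) (n : ℤ) :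
    ‖gTerm β c n‖ = Real.exp (-(π^2/β) * (n:ℝ)^2) := by
  rw [gTerm, Complex.norm_exp]
  congr 1
  rw [Complex.add_re, Complex.ofReal_re, Complex.mul_I_re, Complex.ofReal_im]
  ring

lemma gTerm_summable {β : ℝ} (hβ : 0 < β) (c : ℝ) : Summable (gTerm β c) := by
  refine summable_norm_iff.mp ?_
  have := gauss_summable0 (b := π^2/β) (by positivity)
  exact this.congr fun n => (norm_gTerm β c n).symm

lemma poisson (β c : ℝ) (hβ : 0 < β) :
    (((∑' n : ℤ, Real.exp (-β * ((n:ℝ) - c)^2) : ℝ)) : ℂ)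
      = (1 / (((β/π : ℝ) : ℂ)) ^ ((1/2 : ℂ))) * ∑' n : ℤ, gTerm β c n := by
  have hπ : (0:ℝ) < π := Real.pi_pos
  have hπc : (π:ℂ) ≠ 0 := by exact_mod_cast Real.pi_ne_zero
  have hβc : (β:ℂ) ≠ 0 := by exact_mod_cast hβ.ne'
  have ha : (0:ℝ) < ((β/π : ℝ) : ℂ).re := by rw [Complex.ofReal_re]; positivity
  have key := Complex.tsum_exp_neg_quadratic ha ((β*c/π : ℝ) : ℂ)
  have claim1 : ∀ n : ℤ, Complex.exp (-π * ((β/π : ℝ) : ℂ) * (n:ℂ)^2 + 2*π*((β*c/π : ℝ) : ℂ)*(n:ℂ))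
      = Complex.exp ((β*c^2 : ℝ)) * ((Real.exp (-β * ((n:ℝ) - c)^2) : ℝ) : ℂ) := by
    intro n
    rw [Complex.ofReal_exp, ← Complex.exp_add]
    congr 1
    push_cast
    field_simp
    ring
  have claim2 : ∀ n : ℤ, Complex.exp (-π / ((β/π : ℝ) : ℂ) * ((n:ℂ) + Complex.I * ((β*c/π : ℝ) : ℂ))^2)
      = Complex.exp ((β*c^2 : ℝ)) * gTerm β c n := by
    intro n
    rw [gTerm, ← Complex.exp_add]
    congr 1
    push_cast
    have hI : (Complex.I)^2 = -1 := Complex.I_sq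
    field_simp
    ring_nf
    rw [hI]
    ring
  rw [Complex.ofReal_tsum]
  have e1 : (∑' n : ℤ, Complex.exp (-π * ((β/π : ℝ) : ℂ) * (n:ℂ)^2 + 2*π*((β*c/π : ℝ) : ℂ)*(n:ℂ)))
      = Complex.exp ((β*c^2 : ℝ)) * ∑' n : ℤ, ((Real.exp (-β * ((n:ℝ) - c)^2) : ℝ) : ℂ) := by
    rw [← tsum_mul_left]; exact tsum_congr claim1
  have e2 : (∑' n : ℤ, Complex.exp (-π / ((β/π : ℝ) : ℂ) * ((n:ℂ) + Complex.I * ((β*c/π : ℝ) : ℂ))^2))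
      = Complex.exp ((β*c^2 : ℝ)) * ∑' n : ℤ, gTerm β c n := by
    rw [← tsum_mul_left]; exact tsum_congr claim2
  rw [e1, e2] at key
  have hne : Complex.exp ((β*c^2 : ℝ)) ≠ 0 := Complex.exp_ne_zero _
  refine mul_left_cancel₀ hne ?_
  rw [key]; ring

/-- Z(β, α) = 1 + o(β) as β → 0⁺, i.e.
lim_{β→0⁺} (Z(β, α) − 1)/β = 0. -/
theorem thetaRatio_one_plus_little_o
    (α : ℝ) :
    Filter.Tendsto (fun β => (thetaRatio β α - 1) / β)
      (nhdsWithin 0 (Set.Ioi 0)) (nhds 0) := by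
  have hπ : (0:ℝ) < π := Real.pi_pos
  set C : ℝ := ∑' n : ℤ, Real.exp (-(π^2/2) * (n:ℝ)^2) with hC
  have hC0 : 0 ≤ C := tsum_nonneg fun n => (Real.exp_pos _).le
  set A : ℝ := 2 * C * Real.exp 1 * π ^ ((1:ℝ)/2) with hA
  have hG : Tendsto (fun β : ℝ => A * ((β⁻¹) ^ ((3:ℝ)/2) * Real.exp (-(π^2/2) * β⁻¹)))
      (nhdsWithin 0 (Set.Ioi 0)) (nhds 0) := by
    have h1 : Tendsto (fun x : ℝ => x ^ ((3:ℝ)/2) * Real.exp (-(π^2/2) * x)) atTop (nhds 0) :=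
      tendsto_rpow_mul_exp_neg_mul_atTop_nhds_zero _ _ (by positivity)
    have h2 := (h1.comp tendsto_inv_nhdsGT_zero).const_mul A
    simpa using h2
  refine squeeze_zero_norm' ?_ hG
  filter_upwards [Ioc_mem_nhdsGT_of_mem (by norm_num : (0:ℝ) ∈ Set.Ico 0 1)] with β hβm
  obtain ⟨hβ, hβ1⟩ := hβm
  set s : ℝ := Real.exp (-(π^2/2) * β⁻¹) with hs_def
  have hs0 : 0 ≤ s := (Real.exp_pos _).le
  set N : ℝ := ∑' n : ℤ, Real.exp (-β * ((n : ℝ) - α - 1 / 2) ^ 2) with hN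
  set D : ℝ := ∑' n : ℤ, Real.exp (-β * ((n : ℝ) - α) ^ 2) with hD
  have hNc : N = ∑' n : ℤ, Real.exp (-β * ((n : ℝ) - (α + 1/2)) ^ 2) := by
    refine tsum_congr fun n => ?_
    rw [show ((n:ℝ) - α - 1/2) = ((n:ℝ) - (α + 1/2)) by ring]
  -- lower bound on D
  have hsD := gauss_summable hβ α
  have hD1 : Real.exp (-1) ≤ D := by
    have hle := Summable.le_tsum hsD ⌈α⌉ (fun j _ => (Real.exp_pos _).le)
    refine le_trans ?_ hle
    rw [Real.exp_le_exp]
    have h1 : α ≤ (⌈α⌉ : ℝ) := Int.le_ceil α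
    have h2 : ((⌈α⌉ : ℝ)) < α + 1 := Int.ceil_lt_add_one α
    nlinarith
  have hD0 : 0 < D := lt_of_lt_of_le (Real.exp_pos _) hD1
  -- Poisson
  have hP1 := poisson β (α + 1/2) hβ
  have hP2 := poisson β α hβ
  set K : ℂ := 1 / (((β/π : ℝ) : ℂ)) ^ ((1/2 : ℂ)) with hK_def
  have hg1 := gTerm_summable hβ (α + 1/2)
  have hg2 := gTerm_summable hβ α
  -- difference of theta sums
  have hND : ((N : ℂ)) - ((D : ℂ)) = K * ((∑' n : ℤ, gTerm β (α+1/2) n) - ∑' n : ℤ, gTerm β α n) := by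
    rw [mul_sub]
    rw [hNc, hD]
    rw [hP1, hP2]
  -- norm of K
  have hKnorm : ‖K‖ = π ^ ((1:ℝ)/2) * (β⁻¹) ^ ((1:ℝ)/2) := by
    have hx : (0:ℝ) < β/π := by positivity
    rw [hK_def, norm_div, norm_one,
      Complex.norm_cpow_eq_rpow_re_of_pos hx]
    have : ((1/2 : ℂ)).re = (1:ℝ)/2 := by norm_num
    rw [this, Real.div_rpow hβ.le hπ.le, Real.inv_rpow hβ.le]
    field_simp
  -- bound on the difference of gTerm sums
  have hTdiff : ‖(∑' n : ℤ, gTerm β (α+1/2) n) - ∑' n : ℤ, gTerm β α n‖ ≤ 2 * s * C := by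
    rw [← Summable.tsum_sub hg1 hg2]
    have hnormsum : Summable (fun n : ℤ => ‖gTerm β (α+1/2) n - gTerm β α n‖) :=
      summable_norm_iff.mpr (hg1.sub hg2)
    have hbsum : Summable (fun n : ℤ => 2 * s * Real.exp (-(π^2/2) * (n:ℝ)^2)) :=
      (gauss_summable0 (by positivity)).mul_left _
    calc ‖∑' n : ℤ, (gTerm β (α+1/2) n - gTerm β α n)‖
        ≤ ∑' n : ℤ, ‖gTerm β (α+1/2) n - gTerm β α n‖ := norm_tsum_le_tsum_norm hnormsum
      _ ≤ ∑' n : ℤ, 2 * s * Real.exp (-(π^2/2) * (n:ℝ)^2) := by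
          refine Summable.tsum_le_tsum (fun n => ?_) hnormsum hbsum
          rcases eq_or_ne n 0 with rfl | hn
          · have : gTerm β (α+1/2) 0 - gTerm β α 0 = 0 := by
              simp [gTerm]
            rw [this, norm_zero]
            exact mul_nonneg (mul_nonneg two_pos.le hs0) (Real.exp_nonneg _)
          · have hn2 : (1:ℝ) ≤ (n:ℝ)^2 := by
              have h1 : (1:ℤ) ≤ |n| := Int.one_le_abs hn
              have : (1:ℤ) ≤ n^2 := by nlinarith [_root_.sq_abs n]
              exact_mod_cast this
            have hkey : ∀ c : ℝ, ‖gTerm β c n‖ ≤ s * Real.exp (-(π^2/2) * (n:ℝ)^2) := by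
              intro c
              rw [norm_gTerm, hs_def, ← Real.exp_add, Real.exp_le_exp]
              have hβi : (1:ℝ) ≤ β⁻¹ := by rw [le_inv_comm₀ one_pos hβ]; simpa using hβ1
              have hd : π^2/β = π^2 * β⁻¹ := by field_simp
              rw [hd]
              nlinarith [mul_le_mul_of_nonneg_left hn2 (by positivity : (0:ℝ) ≤ π^2 * β⁻¹ / 2),
                mul_le_mul_of_nonneg_right hβi (by positivity : (0:ℝ) ≤ π^2 * (n:ℝ)^2 / 2)]
            calc ‖gTerm β (α+1/2) n - gTerm β α n‖
                ≤ ‖gTerm β (α+1/2) n‖ + ‖gTerm β α n‖ := norm_sub_le _ _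
              _ ≤ 2 * s * Real.exp (-(π^2/2) * (n:ℝ)^2) := by
                  have := hkey (α+1/2); have := hkey α; linarith [hkey (α+1/2), hkey α]
      _ = 2 * s * C := by rw [hC, tsum_mul_left]
  -- bound on |N - D|
  have hNDabs : |N - D| ≤ π ^ ((1:ℝ)/2) * (β⁻¹) ^ ((1:ℝ)/2) * (2 * s * C) := by
    have h1 : |N - D| = ‖((N - D : ℝ) : ℂ)‖ := by
      rw [Complex.norm_real, Real.norm_eq_abs]
    rw [h1]
    have h2 : ((N - D : ℝ) : ℂ) = K * ((∑' n : ℤ, gTerm β (α+1/2) n) - ∑' n : ℤ, gTerm β α n) := by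
      push_cast
      exact hND
    rw [h2, norm_mul, hKnorm]
    exact mul_le_mul_of_nonneg_left hTdiff (by positivity)
  -- bound on |Z - 1|
  have hZ : |thetaRatio β α - 1| ≤ A * (β⁻¹) ^ ((1:ℝ)/2) * s := by
    have hZeq : thetaRatio β α - 1 = (N - D) / D := by
      rw [thetaRatio, ← hN, ← hD]
      field_simp
    rw [hZeq, abs_div, abs_of_pos hD0]
    have step1 : |N - D| / D ≤ |N - D| / Real.exp (-1) :=
      div_le_div_of_nonneg_left (abs_nonneg _) (Real.exp_pos _) hD1
    refine step1.trans ?_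
    rw [Real.exp_neg, div_eq_mul_inv, inv_inv]
    calc |N - D| * Real.exp 1
        ≤ (π ^ ((1:ℝ)/2) * (β⁻¹) ^ ((1:ℝ)/2) * (2 * s * C)) * Real.exp 1 :=
          mul_le_mul_of_nonneg_right hNDabs (Real.exp_pos _).le
      _ = A * (β⁻¹) ^ ((1:ℝ)/2) * s := by rw [hA]; ring
  -- conclusion
  have hβi0 : (0:ℝ) < β⁻¹ := by positivity
  rw [Real.norm_eq_abs, abs_div, abs_of_pos hβ]
  calc |thetaRatio β α - 1| / β ≤ (A * (β⁻¹) ^ ((1:ℝ)/2) * s) / β :=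
        by gcongr
    _ = A * ((β⁻¹) ^ ((3:ℝ)/2) * s) := by
        rw [show ((3:ℝ)/2) = (1:ℝ)/2 + 1 by norm_num, Real.rpow_add hβi0, Real.rpow_one]
        field_simp
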